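/- arXiv:1606.06223 — 2 statements merged into one kernel-verified Lean document; each statement's English description precedes it below -/
import Mathlib

section
/- For constants λ_j, Z_j, c > 0 and R > 0, the integral 2πλ_j ∫₀^{R/c} exp(−Z_j r²) · ((R² − c² r²)/R²) · r dr equals πλ_j/Z_j − (λ_j π c²/(R² Z_j²)) · (1 − exp(−Z_j R²/c²)). -/
open MeasureTheory Real Set intervalIntegral

/-- For constants `λ_j, Z_j, c > 0` and `R > 0`,
`2πλ_j ∫₀^{R/c} exp(−Z_j r²)·((R² − c²r²)/R²)·r dr
  = πλ_j/Z_j − (λ_j π c²/(R² Z_j²))·(1 − exp(−Z_j R²/c²))`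
(the Matérn tier-`j` association probability). -/
theorem association_prob_tier_j_matern
    (lamj Zj c R : ℝ) (hlamj : 0 < lamj) (hZj : 0 < Zj) (hc : 0 < c) (hR : 0 < R) :
    2 * π * lamj *
        ∫ r in (0 : ℝ)..(R / c), exp (-(Zj * r ^ 2)) * ((R ^ 2 - c ^ 2 * r ^ 2) / R ^ 2) * r
      = π * lamj / Zj -
        (lamj * π * c ^ 2 / (R ^ 2 * Zj ^ 2)) * (1 - exp (-(Zj * R ^ 2 / c ^ 2))) := by
  have hZ : Zj ≠ 0 := hZj.ne'
  have hRne : R ≠ 0 := hR.ne'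
  have hcne : c ≠ 0 := hc.ne'
  set F : ℝ → ℝ := fun r =>
    exp (-(Zj * r ^ 2)) * (c ^ 2 / (2 * Zj ^ 2 * R ^ 2) - 1 / (2 * Zj)
      + c ^ 2 * r ^ 2 / (2 * Zj * R ^ 2)) with hF
  have hderiv : ∀ r ∈ Set.uIcc (0 : ℝ) (R / c),
      HasDerivAt F (exp (-(Zj * r ^ 2)) * ((R ^ 2 - c ^ 2 * r ^ 2) / R ^ 2) * r) r := by
    intro r _
    have h1 : HasDerivAt (fun r : ℝ => -(Zj * r ^ 2)) (-(2 * Zj * r)) r := by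
      have := ((hasDerivAt_pow 2 r).const_mul Zj).neg
      exact this.congr_deriv (by norm_num; ring)
    have h2 := h1.exp
    have h3 : HasDerivAt (fun r : ℝ => c ^ 2 / (2 * Zj ^ 2 * R ^ 2) - 1 / (2 * Zj)
        + c ^ 2 * r ^ 2 / (2 * Zj * R ^ 2)) (c ^ 2 * (2 * r) / (2 * Zj * R ^ 2)) r := by
      have := (((hasDerivAt_pow 2 r).const_mul (c ^ 2)).div_const (2 * Zj * R ^ 2)).const_add
        (c ^ 2 / (2 * Zj ^ 2 * R ^ 2) - 1 / (2 * Zj))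
      exact this.congr_deriv (by norm_num)
    have := h2.mul h3
    exact this.congr_deriv (by field_simp; ring)
  have hcont : IntervalIntegrable
      (fun r => exp (-(Zj * r ^ 2)) * ((R ^ 2 - c ^ 2 * r ^ 2) / R ^ 2) * r)
      MeasureTheory.volume 0 (R / c) := by
    apply Continuous.intervalIntegrable
    continuity
  rw [intervalIntegral.integral_eq_sub_of_hasDerivAt hderiv hcont]
  simp only [hF]
  have : -(Zj * (R / c) ^ 2) = -(Zj * R ^ 2 / c ^ 2) := by field_simp
  rw [this]
  field_simp
  simp only [ne_eq, OfNat.ofNat_ne_zero, not_false_eq_true, zero_pow, mul_zero, neg_zero, Real.exp_zero]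
  ring
end

section
/- Let P_c(ζ) denote the total coverage probability in the K-tier model when the user's distance to its cluster center is ζY₀ for a fixed positive random variable Y₀ with continuous distribution. Then lim_{ζ→∞} P_c(ζ) = ∑_{j=1}^K λ_j / (∑_{k=1}^K c_{jk}² (λ_k(G(α,τ)+1) + λ_k′ H(α,τ))), i.e., the coverage probability converges to that of a user distributed independently of the BS locations. -/
open MeasureTheory Real Set Filter Finset
open Topology

/-- Gaussian hypergeometric function via its Euler integral representation. -/
noncomputable def hyp2F1 (a b c t : ℝ) : ℝ :=
  (Real.Gamma c / (Real.Gamma b * Real.Gamma (c - b))) *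
    ∫ z in (0 : ℝ)..1, z ^ (b - 1) * (1 - z) ^ (c - b - 1) * (1 - t * z) ^ (-a)

/-- The interference constant `G(α,τ)`. -/
noncomputable def Gconst (α τ : ℝ) : ℝ :=
  (2 * τ / (α - 2)) * hyp2F1 1 (1 - 2 / α) (2 - 2 / α) (-τ)

/-- The interference constant `H(α,τ)`. -/
noncomputable def Hconst (α τ : ℝ) : ℝ :=
  τ ^ (2 / α) * (2 * Real.pi / α) * (1 / Real.sin (2 * Real.pi / α))

/-! ### Auxiliary lemmas -/

lemma aux_G_nonneg {α τ : ℝ} (hα : 2 < α) (hτ : 0 < τ) : 0 ≤ Gconst α τ := by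
  have hα0 : 0 < α := by linarith
  have h2α : 2 / α < 1 := (div_lt_one hα0).mpr (by linarith)
  have hb : 0 < 1 - 2 / α := by linarith
  have hcb : (2 - 2 / α) - (1 - 2 / α) = 1 := by ring
  have hΓc : 0 < Real.Gamma (2 - 2 / α) := Real.Gamma_pos_of_pos (by linarith)
  have hΓb : 0 < Real.Gamma (1 - 2 / α) := Real.Gamma_pos_of_pos hb
  have hΓcb : 0 < Real.Gamma ((2 - 2 / α) - (1 - 2 / α)) := by
    rw [hcb]; exact Real.Gamma_pos_of_pos one_pos
  have hint : 0 ≤ ∫ z in (0 : ℝ)..1,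
      z ^ ((1 - 2 / α) - 1) * (1 - z) ^ ((2 - 2 / α) - (1 - 2 / α) - 1) *
        (1 - (-τ) * z) ^ (-(1:ℝ)) := by
    apply intervalIntegral.integral_nonneg zero_le_one
    intro u hu
    have h1 : (0:ℝ) ≤ u := hu.1
    have h2 : u ≤ 1 := hu.2
    have hbase : (0:ℝ) ≤ 1 - (-τ) * u := by nlinarith
    exact mul_nonneg (mul_nonneg (Real.rpow_nonneg h1 _)
      (Real.rpow_nonneg (by linarith) _)) (Real.rpow_nonneg hbase _)
  have hcoef : 0 ≤ 2 * τ / (α - 2) := div_nonneg (by positivity) (by linarith)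
  exact mul_nonneg hcoef (mul_nonneg
    (div_nonneg hΓc.le (mul_nonneg hΓb.le hΓcb.le)) hint)

lemma aux_H_nonneg {α τ : ℝ} (hα : 2 < α) (hτ : 0 < τ) : 0 ≤ Hconst α τ := by
  have hα0 : 0 < α := by linarith
  have hsin : 0 < Real.sin (2 * Real.pi / α) := by
    apply Real.sin_pos_of_pos_of_lt_pi
    · positivity
    · rw [div_lt_iff₀ hα0]
      nlinarith [Real.pi_pos]
  have h1 : (0:ℝ) ≤ τ ^ (2 / α) := Real.rpow_nonneg hτ.le _
  have h2 : (0:ℝ) ≤ 2 * Real.pi / α := by positivity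
  have h3 : (0:ℝ) ≤ 1 / Real.sin (2 * Real.pi / α) := by positivity
  exact mul_nonneg (mul_nonneg h1 h2) h3

lemma aux_gauss_integral {b : ℝ} (hb : 0 < b) :
    ∫ x in Set.Ioi (0:ℝ), x * Real.exp (-b * x ^ 2) = (2 * b)⁻¹ := by
  have h := integral_Ioi_of_hasDerivAt_of_tendsto
      (f := fun x : ℝ => -(2 * b)⁻¹ * Real.exp (-b * x ^ 2))
      (f' := fun x : ℝ => x * Real.exp (-b * x ^ 2)) (a := 0) (m := 0)
      ?_ ?_ ?_ ?_
  · rw [h]; simp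
  · exact Continuous.continuousWithinAt (by continuity)
  · intro x hx
    have h1 : HasDerivAt (fun x : ℝ => -b * x ^ 2) (-b * (2 * x)) x := by
      simpa using (hasDerivAt_pow 2 x).const_mul (-b)
    have h2 := (h1.exp).const_mul (-(2 * b)⁻¹)
    convert h2 using 1
    · rfl
    have hb0 : b ≠ 0 := hb.ne'
    field_simp
  · exact (integrable_mul_exp_neg_mul_sq hb).integrableOn
  · have h1 : Tendsto (fun x : ℝ => -b * x ^ 2) atTop atBot := by
      have h2 : Tendsto (fun x : ℝ => b * x ^ 2) atTop atTop :=
        (tendsto_pow_atTop (by norm_num : (2:ℕ) ≠ 0)).const_mul_atTop hb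
      simpa [Function.comp_def, neg_mul] using tendsto_neg_atTop_atBot.comp h2
    have h3 : Tendsto (fun x : ℝ => Real.exp (-b * x ^ 2)) atTop (𝓝 0) :=
      Real.tendsto_exp_atBot.comp h1
    simpa using h3.const_mul (-(2 * b)⁻¹)

lemma aux_gauss_integral' {b : ℝ} (hb : 0 < b) :
    ∫ x in Set.Ioi (0:ℝ), Real.exp (-(b * x ^ 2)) * x = (2 * b)⁻¹ := by
  rw [← aux_gauss_integral hb]
  apply setIntegral_congr_fun measurableSet_Ioi
  intro x _
  dsimp only
  rw [← neg_mul]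
  exact mul_comm _ _

lemma aux_gauss_integrable {b : ℝ} (hb : 0 < b) :
    IntegrableOn (fun x : ℝ => Real.exp (-(b * x ^ 2)) * x) (Set.Ioi 0) := by
  have h := (integrable_mul_exp_neg_mul_sq hb).integrableOn (s := Set.Ioi 0)
  apply h.congr_fun _ measurableSet_Ioi
  intro x _
  dsimp only
  rw [← neg_mul]
  exact mul_comm _ _

lemma aux_indicator_bounds {α τ : ℝ} (hτ : 0 < τ) {f : ℝ → ℝ} (hfnn : ∀ y, 0 ≤ f y)
    {ζ a : ℝ} (hζ : 0 < ζ) (ha : 0 < a) (u : ℝ) :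
    0 ≤ (Set.Ioi (a / ζ)).indicator
        (fun u => f u / (1 + τ * ((ζ * u) / a) ^ (-α))) u ∧
    (Set.Ioi (a / ζ)).indicator
        (fun u => f u / (1 + τ * ((ζ * u) / a) ^ (-α))) u ≤ f u := by
  by_cases h : u ∈ Set.Ioi (a / ζ)
  · rw [Set.indicator_of_mem h]
    have hu : 0 < u := lt_trans (div_pos ha hζ) h
    have hbase : 0 ≤ (ζ * u) / a := by positivity
    have hD : 1 ≤ 1 + τ * ((ζ * u) / a) ^ (-α) :=
      le_add_of_nonneg_right (mul_nonneg hτ.le (Real.rpow_nonneg hbase _))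
    exact ⟨div_nonneg (hfnn u) (le_trans zero_le_one hD), div_le_self (hfnn u) hD⟩
  · rw [Set.indicator_of_notMem h]
    exact ⟨le_refl 0, hfnn u⟩

lemma aux_inner_eq (α τ : ℝ) (f : ℝ → ℝ) {ζ a : ℝ} (hζ : 0 < ζ) (ha : 0 < a) :
    (∫ y in Set.Ioi a, (f (y / ζ) / ζ) / (1 + τ * (y / a) ^ (-α))) =
    ∫ u in Set.Ioi (0:ℝ),
      (Set.Ioi (a / ζ)).indicator
        (fun u => f u / (1 + τ * ((ζ * u) / a) ^ (-α))) u := by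
  have hza : ζ * (a / ζ) = a := by field_simp
  have h := integral_comp_mul_left_Ioi
      (fun y => (f (y / ζ) / ζ) / (1 + τ * (y / a) ^ (-α))) (a / ζ) hζ
  rw [hza] at h
  rw [integral_indicator measurableSet_Ioi, Measure.restrict_restrict measurableSet_Ioi,
    Set.Ioi_inter_Ioi, max_eq_left (le_of_lt (div_pos ha hζ))]
  have h2 : (∫ y in Set.Ioi a, (f (y / ζ) / ζ) / (1 + τ * (y / a) ^ (-α)))
      = ζ * ∫ x in Set.Ioi (a / ζ),
          (f (ζ * x / ζ) / ζ) / (1 + τ * ((ζ * x) / a) ^ (-α)) := by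
    rw [h, smul_eq_mul, ← mul_assoc, mul_inv_cancel₀ hζ.ne', one_mul]
  rw [h2, ← integral_const_mul]
  apply setIntegral_congr_fun measurableSet_Ioi
  intro x _
  have hx : ζ * x / ζ = x := by field_simp
  dsimp only
  rw [hx, div_right_comm, mul_comm, div_mul_cancel₀ _ hζ.ne']

lemma aux_inner_cont {α τ : ℝ} (hτ : 0 < τ) {f : ℝ → ℝ} (hfcont : Continuous f)
    {ζ a : ℝ} (hζ : 0 < ζ) (ha : 0 < a) :
    ContinuousOn (fun u => f u / (1 + τ * ((ζ * u) / a) ^ (-α))) (Set.Ioi 0) := by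
  intro u hu
  have hu0 : (0:ℝ) < u := hu
  apply ContinuousAt.continuousWithinAt
  have h1 : ContinuousAt (fun u : ℝ => (ζ * u) / a) u :=
    ((continuousAt_const.mul continuousAt_id).div continuousAt_const ha.ne')
  have h2 : ContinuousAt (fun u : ℝ => ((ζ * u) / a) ^ (-α)) u :=
    h1.rpow_const (Or.inl (by positivity))
  have hD : (1 + τ * ((ζ * u) / a) ^ (-α)) ≠ 0 := by
    have := Real.rpow_nonneg (show (0:ℝ) ≤ (ζ * u) / a by positivity) (-α)
    positivity
  exact (hfcont.continuousAt).div
    (continuousAt_const.add (continuousAt_const.mul h2)) hD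

lemma aux_inner_bounds {α τ : ℝ} (hτ : 0 < τ) {f : ℝ → ℝ} (hfcont : Continuous f)
    (hfnn : ∀ y, 0 ≤ f y) (hfInt : IntegrableOn f (Set.Ioi 0))
    (hfint : ∫ y in Set.Ioi (0:ℝ), f y = 1)
    {ζ a : ℝ} (hζ : 0 < ζ) (ha : 0 < a) :
    0 ≤ (∫ y in Set.Ioi a, (f (y / ζ) / ζ) / (1 + τ * (y / a) ^ (-α))) ∧
    (∫ y in Set.Ioi a, (f (y / ζ) / ζ) / (1 + τ * (y / a) ^ (-α))) ≤ 1 := by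
  rw [aux_inner_eq α τ f hζ ha]
  have hmeas : AEStronglyMeasurable
      ((Set.Ioi (a / ζ)).indicator (fun u => f u / (1 + τ * ((ζ * u) / a) ^ (-α))))
      (volume.restrict (Set.Ioi 0)) :=
    ((aux_inner_cont hτ hfcont hζ ha).aestronglyMeasurable measurableSet_Ioi).indicator
      measurableSet_Ioi
  have hindInt : IntegrableOn
      ((Set.Ioi (a / ζ)).indicator (fun u => f u / (1 + τ * ((ζ * u) / a) ^ (-α))))
      (Set.Ioi 0) := by
    apply Integrable.mono' hfInt hmeas
    apply Filter.Eventually.of_forall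
    intro u
    rw [Real.norm_eq_abs, abs_of_nonneg (aux_indicator_bounds hτ hfnn hζ ha u).1]
    exact (aux_indicator_bounds hτ hfnn hζ ha u).2
  constructor
  · apply integral_nonneg
    intro u
    exact (aux_indicator_bounds hτ hfnn hζ ha u).1
  · conv_rhs => rw [← hfint]
    apply integral_mono hindInt hfInt
    intro u
    exact (aux_indicator_bounds hτ hfnn hζ ha u).2

lemma aux_inner_tendsto {α τ : ℝ} (hα : 2 < α) (hτ : 0 < τ)
    {f : ℝ → ℝ} (hfcont : Continuous f) (hfnn : ∀ y, 0 ≤ f y)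
    (hfInt : IntegrableOn f (Set.Ioi 0)) (hfint : ∫ y in Set.Ioi (0:ℝ), f y = 1)
    {a : ℝ} (ha : 0 < a) :
    Tendsto (fun ζ : ℝ => ∫ y in Set.Ioi a, (f (y / ζ) / ζ) / (1 + τ * (y / a) ^ (-α)))
      atTop (𝓝 1) := by
  have hα0 : 0 < α := by linarith
  have key : Tendsto (fun ζ : ℝ => ∫ u in Set.Ioi (0:ℝ),
      (Set.Ioi (a / ζ)).indicator
        (fun u => f u / (1 + τ * ((ζ * u) / a) ^ (-α))) u)
      atTop (𝓝 (∫ u in Set.Ioi (0:ℝ), f u)) := by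
    apply tendsto_integral_filter_of_dominated_convergence f _ _ hfInt
    · -- pointwise limit
      filter_upwards [ae_restrict_mem measurableSet_Ioi] with u hu
      have hu0 : (0:ℝ) < u := hu
      have hg : Tendsto (fun ζ : ℝ => f u / (1 + τ * ((ζ * u) / a) ^ (-α)))
          atTop (𝓝 (f u)) := by
        have h1 : Tendsto (fun ζ : ℝ => (ζ * u) / a) atTop atTop :=
          (tendsto_id.atTop_mul_const hu0).atTop_div_const ha
        have h2 : Tendsto (fun ζ : ℝ => ((ζ * u) / a) ^ (-α)) atTop (𝓝 0) :=
          (tendsto_rpow_neg_atTop hα0).comp h1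
        have h3 : Tendsto (fun ζ : ℝ => 1 + τ * ((ζ * u) / a) ^ (-α)) atTop (𝓝 1) := by
          have := tendsto_const_nhds (x := (1:ℝ)) (f := atTop (α := ℝ)) |>.add
            (h2.const_mul τ)
          simpa using this
        have := tendsto_const_nhds (x := f u) (f := atTop (α := ℝ)) |>.div h3 one_ne_zero
        rw [div_one] at this
        exact this
      apply hg.congr'
      filter_upwards [eventually_gt_atTop (max (a / u) 0)] with ζ hζ
      have hζ0 : 0 < ζ := lt_of_le_of_lt (le_max_right _ _) hζ
      have hau : a / u < ζ := lt_of_le_of_lt (le_max_left _ _) hζ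
      have hmem : u ∈ Set.Ioi (a / ζ) := by
        simp only [Set.mem_Ioi]
        rw [div_lt_iff₀ hζ0]
        have := (div_lt_iff₀ hu0).mp hau
        linarith [mul_comm ζ u]
      rw [Set.indicator_of_mem hmem]
    · -- measurability
      filter_upwards [eventually_gt_atTop 0] with ζ hζ
      exact ((aux_inner_cont hτ hfcont hζ ha).aestronglyMeasurable
        measurableSet_Ioi).indicator measurableSet_Ioi
    · -- bound
      filter_upwards [eventually_gt_atTop 0] with ζ hζ
      apply Filter.Eventually.of_forall
      intro u
      rw [Real.norm_eq_abs, abs_of_nonneg (aux_indicator_bounds hτ hfnn hζ ha u).1]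
      exact (aux_indicator_bounds hτ hfnn hζ ha u).2
  rw [hfint] at key
  apply key.congr'
  filter_upwards [eventually_gt_atTop 0] with ζ hζ
  exact (aux_inner_eq α τ f hζ ha).symm

lemma aux_term0_tendsto {S0 : ℝ} (hS0 : 0 < S0)
    {f : ℝ → ℝ} (hfcont : Continuous f) (hfnn : ∀ y, 0 ≤ f y)
    (hfInt : IntegrableOn f (Set.Ioi 0)) :
    Tendsto (fun ζ : ℝ =>
        ∫ w in Set.Ioi (0:ℝ), Real.exp (-(π * S0 * w ^ 2)) * (f (w / ζ) / ζ))
      atTop (𝓝 0) := by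
  have key : Tendsto (fun ζ : ℝ => ∫ u in Set.Ioi (0:ℝ),
      Real.exp (-(π * S0 * (ζ * u) ^ 2)) * f u) atTop
      (𝓝 (∫ u in Set.Ioi (0:ℝ), (0:ℝ))) := by
    apply tendsto_integral_filter_of_dominated_convergence f _ _ hfInt
    · filter_upwards [ae_restrict_mem measurableSet_Ioi] with u hu
      have hu0 : (0:ℝ) < u := hu
      have h1 : Tendsto (fun ζ : ℝ => π * S0 * (ζ * u) ^ 2) atTop atTop := by
        have h2 : Tendsto (fun ζ : ℝ => (π * S0 * u ^ 2) * ζ ^ 2) atTop atTop :=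
          (tendsto_pow_atTop (by norm_num : (2:ℕ) ≠ 0)).const_mul_atTop (by positivity)
        apply h2.congr
        intro ζ; ring
      have h3 : Tendsto (fun ζ : ℝ => Real.exp (-(π * S0 * (ζ * u) ^ 2))) atTop (𝓝 0) :=
        Real.tendsto_exp_atBot.comp (tendsto_neg_atTop_atBot.comp h1)
      simpa using h3.mul_const (f u)
    · apply Filter.Eventually.of_forall
      intro ζ
      exact (Continuous.aestronglyMeasurable (by continuity))
    · apply Filter.Eventually.of_forall
      intro ζ
      apply Filter.Eventually.of_forall
      intro u
      have he : Real.exp (-(π * S0 * (ζ * u) ^ 2)) ≤ 1 := by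
        rw [Real.exp_le_one_iff]
        have : (0:ℝ) ≤ π * S0 * (ζ * u) ^ 2 := by positivity
        linarith
      rw [Real.norm_eq_abs, abs_of_nonneg (mul_nonneg (Real.exp_pos _).le (hfnn u))]
      calc Real.exp (-(π * S0 * (ζ * u) ^ 2)) * f u ≤ 1 * f u :=
            mul_le_mul_of_nonneg_right he (hfnn u)
        _ = f u := one_mul _
  rw [integral_zero] at key
  apply key.congr'
  filter_upwards [eventually_gt_atTop 0] with ζ hζ
  have h := integral_comp_mul_left_Ioi
      (fun w => Real.exp (-(π * S0 * w ^ 2)) * (f (w / ζ) / ζ)) 0 hζ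
  rw [mul_zero] at h
  have h2 : ∀ u : ℝ, Real.exp (-(π * S0 * (ζ * u) ^ 2)) * f u
      = ζ * (Real.exp (-(π * S0 * (ζ * u) ^ 2)) * (f (ζ * u / ζ) / ζ)) := by
    intro u
    rw [mul_div_cancel_left₀ _ hζ.ne']
    field_simp
  calc (∫ u in Set.Ioi (0:ℝ), Real.exp (-(π * S0 * (ζ * u) ^ 2)) * f u)
      = ∫ u in Set.Ioi (0:ℝ),
          ζ * (Real.exp (-(π * S0 * (ζ * u) ^ 2)) * (f (ζ * u / ζ) / ζ)) := by
        apply setIntegral_congr_fun measurableSet_Ioi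
        intro u _
        exact h2 u
    _ = ζ * ∫ u in Set.Ioi (0:ℝ),
          Real.exp (-(π * S0 * (ζ * u) ^ 2)) * (f (ζ * u / ζ) / ζ) :=
        integral_const_mul _ _
    _ = ∫ w in Set.Ioi (0:ℝ), Real.exp (-(π * S0 * w ^ 2)) * (f (w / ζ) / ζ) := by
        rw [h, smul_eq_mul, ← mul_assoc, mul_inv_cancel₀ hζ.ne', one_mul]

lemma aux_outer_cont {α τ : ℝ} (hτ : 0 < τ) {f : ℝ → ℝ} (hfcont : Continuous f)
    (hfnn : ∀ y, 0 ≤ f y) (hfIntR : Integrable f)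
    {cst ζ : ℝ} (hcst : 0 < cst) (hζ : 0 < ζ) :
    ContinuousOn (fun w : ℝ =>
      ∫ y in Set.Ioi (cst * w), (f (y / ζ) / ζ) / (1 + τ * (y / (cst * w)) ^ (-α)))
      (Set.Ioi 0) := by
  intro w₀ hw₀
  have hw₀0 : (0:ℝ) < w₀ := hw₀
  apply ContinuousAt.continuousWithinAt
  have hev : (fun w : ℝ => ∫ y, (Set.Ioi (cst * w)).indicator
        (fun y => (f (y / ζ) / ζ) / (1 + τ * (y / (cst * w)) ^ (-α))) y
          ∂(volume.restrict (Set.Ioi 0)))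
      =ᶠ[𝓝 w₀] (fun w : ℝ =>
        ∫ y in Set.Ioi (cst * w), (f (y / ζ) / ζ) / (1 + τ * (y / (cst * w)) ^ (-α))) := by
    filter_upwards [isOpen_Ioi.mem_nhds hw₀] with w hw
    have hw0 : (0:ℝ) < w := hw
    rw [integral_indicator measurableSet_Ioi, Measure.restrict_restrict measurableSet_Ioi,
      Set.Ioi_inter_Ioi, max_eq_left (by positivity : (0:ℝ) ≤ cst * w)]
  apply ContinuousAt.congr _ hev
  apply continuousAt_of_dominated (bound := fun y => f (y / ζ) / ζ)
  · -- measurability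
    filter_upwards [isOpen_Ioi.mem_nhds hw₀] with w hw
    have hw0 : (0:ℝ) < w := hw
    have hcont : ContinuousOn
        (fun y => (f (y / ζ) / ζ) / (1 + τ * (y / (cst * w)) ^ (-α))) (Set.Ioi 0) := by
      intro y hy
      have hy0 : (0:ℝ) < y := hy
      apply ContinuousAt.continuousWithinAt
      have h1 : ContinuousAt (fun y : ℝ => y / (cst * w)) y :=
        (continuousAt_id.div continuousAt_const (by positivity))
      have h2 : ContinuousAt (fun y : ℝ => (y / (cst * w)) ^ (-α)) y :=
        h1.rpow_const (Or.inl (by positivity))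
      have hD : (1 + τ * (y / (cst * w)) ^ (-α)) ≠ 0 := by
        have := Real.rpow_nonneg (show (0:ℝ) ≤ y / (cst * w) by positivity) (-α)
        positivity
      apply ContinuousAt.div _ (continuousAt_const.add (continuousAt_const.mul h2)) hD
      exact ((hfcont.comp (continuous_id.div_const ζ)).div_const ζ).continuousAt
    exact (hcont.aestronglyMeasurable measurableSet_Ioi).indicator measurableSet_Ioi
  · -- bound
    filter_upwards [isOpen_Ioi.mem_nhds hw₀] with w hw
    apply Filter.Eventually.of_forall
    intro y
    have hw0 : (0:ℝ) < w := hw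
    by_cases hy : y ∈ Set.Ioi (cst * w)
    · rw [Set.indicator_of_mem hy]
      have hy0 : (0:ℝ) < y := lt_trans (by positivity) hy
      have hbase : (0:ℝ) ≤ y / (cst * w) := by positivity
      have hD : 1 ≤ 1 + τ * (y / (cst * w)) ^ (-α) :=
        le_add_of_nonneg_right (mul_nonneg hτ.le (Real.rpow_nonneg hbase _))
      have hnum : 0 ≤ f (y / ζ) / ζ := div_nonneg (hfnn _) hζ.le
      rw [Real.norm_eq_abs, abs_of_nonneg (div_nonneg hnum (le_trans zero_le_one hD))]
      exact div_le_self hnum hD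
    · rw [Set.indicator_of_notMem hy]
      simpa using div_nonneg (hfnn (y / ζ)) hζ.le
  · -- bound integrable
    exact ((hfIntR.comp_div hζ.ne').div_const ζ).integrableOn
  · -- a.e. continuity in w
    have hae : ∀ᵐ y : ℝ, y ≠ cst * w₀ := by
      rw [MeasureTheory.ae_iff]
      simpa using measure_singleton (cst * w₀)
    apply ae_restrict_of_ae
    filter_upwards [hae] with y hy
    rcases lt_or_gt_of_ne hy with hlt | hgt
    · -- y < cst * w₀ : locally zero
      have hop : IsOpen {w : ℝ | y < cst * w} :=
        isOpen_lt continuous_const (continuous_const.mul continuous_id)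
      have hmem : w₀ ∈ {w : ℝ | y < cst * w} := hlt
      apply continuousAt_const.congr
      filter_upwards [hop.mem_nhds hmem] with w hw
      rw [Set.indicator_of_notMem (by simpa using not_lt.mpr hw.le : y ∉ Set.Ioi (cst * w))]
    · -- y > cst * w₀ : locally the smooth function
      have hop : IsOpen {w : ℝ | cst * w < y ∧ 0 < w} :=
        (isOpen_lt (continuous_const.mul continuous_id) continuous_const).inter
          (isOpen_lt continuous_const continuous_id)
      have hmem : w₀ ∈ {w : ℝ | cst * w < y ∧ 0 < w} := ⟨hgt, hw₀0⟩
      have hy0 : (0:ℝ) < y := lt_trans (by positivity) hgt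
      have hcA : ContinuousAt
          (fun w : ℝ => (f (y / ζ) / ζ) / (1 + τ * (y / (cst * w)) ^ (-α))) w₀ := by
        have h1 : ContinuousAt (fun w : ℝ => y / (cst * w)) w₀ :=
          (continuousAt_const.div (continuousAt_const.mul continuousAt_id)
            (by positivity))
        have h2 : ContinuousAt (fun w : ℝ => (y / (cst * w)) ^ (-α)) w₀ :=
          h1.rpow_const (Or.inl (by positivity))
        have hD : (1 + τ * (y / (cst * w₀)) ^ (-α)) ≠ 0 := by
          have := Real.rpow_nonneg (show (0:ℝ) ≤ y / (cst * w₀) by positivity) (-α)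
          positivity
        exact continuousAt_const.div
          (continuousAt_const.add (continuousAt_const.mul h2)) hD
      apply hcA.congr
      filter_upwards [hop.mem_nhds hmem] with w hw
      rw [Set.indicator_of_mem (by simpa using hw.1 : y ∈ Set.Ioi (cst * w))]

lemma aux_outer_tendsto {α τ : ℝ} (hα : 2 < α) (hτ : 0 < τ)
    {f : ℝ → ℝ} (hfcont : Continuous f) (hfnn : ∀ y, 0 ≤ f y)
    (hfInt : IntegrableOn f (Set.Ioi 0)) (hfIntR : Integrable f)
    (hfint : ∫ y in Set.Ioi (0:ℝ), f y = 1)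
    {S cst : ℝ} (hS : 0 < S) (hcst : 0 < cst) :
    Tendsto (fun ζ : ℝ => ∫ w in Set.Ioi (0:ℝ),
        Real.exp (-(π * S * w ^ 2)) *
          (∫ y in Set.Ioi (cst * w),
            (f (y / ζ) / ζ) / (1 + τ * (y / (cst * w)) ^ (-α))) * w)
      atTop (𝓝 ((2 * (π * S))⁻¹)) := by
  have hπS : (0:ℝ) < π * S := by positivity
  have hlim : (∫ w in Set.Ioi (0:ℝ), Real.exp (-(π * S * w ^ 2)) * 1 * w)
      = (2 * (π * S))⁻¹ := by
    rw [← aux_gauss_integral' hπS]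
    apply setIntegral_congr_fun measurableSet_Ioi
    intro w _
    dsimp only
    rw [mul_one]
  rw [← hlim]
  apply tendsto_integral_filter_of_dominated_convergence
      (fun w => Real.exp (-(π * S * w ^ 2)) * w)
  · -- measurability
    filter_upwards [eventually_gt_atTop 0] with ζ hζ
    have hcont : ContinuousOn (fun w : ℝ =>
        Real.exp (-(π * S * w ^ 2)) *
          (∫ y in Set.Ioi (cst * w),
            (f (y / ζ) / ζ) / (1 + τ * (y / (cst * w)) ^ (-α))) * w) (Set.Ioi 0) := by
      apply ContinuousOn.mul _ continuousOn_id
      exact ((Real.continuous_exp.comp (by continuity)).continuousOn).mul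
        (aux_outer_cont hτ hfcont hfnn hfIntR hcst hζ)
    exact hcont.aestronglyMeasurable measurableSet_Ioi
  · -- bound
    filter_upwards [eventually_gt_atTop 0] with ζ hζ
    filter_upwards [ae_restrict_mem measurableSet_Ioi] with w hw
    have hw0 : (0:ℝ) < w := hw
    have hb := aux_inner_bounds hτ hfcont hfnn hfInt hfint hζ
      (show (0:ℝ) < cst * w by positivity) (α := α)
    rw [Real.norm_eq_abs, abs_of_nonneg
      (mul_nonneg (mul_nonneg (Real.exp_pos _).le hb.1) hw0.le)]
    calc Real.exp (-(π * S * w ^ 2)) *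
          (∫ y in Set.Ioi (cst * w),
            (f (y / ζ) / ζ) / (1 + τ * (y / (cst * w)) ^ (-α))) * w
        ≤ Real.exp (-(π * S * w ^ 2)) * 1 * w := by
          apply mul_le_mul_of_nonneg_right _ hw0.le
          exact mul_le_mul_of_nonneg_left hb.2 (Real.exp_pos _).le
      _ = Real.exp (-(π * S * w ^ 2)) * w := by rw [mul_one]
  · -- bound integrable
    exact aux_gauss_integrable hπS
  · -- pointwise limit
    filter_upwards [ae_restrict_mem measurableSet_Ioi] with w hw
    have hw0 : (0:ℝ) < w := hw
    have hinner := aux_inner_tendsto hα hτ hfcont hfnn hfInt hfint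
      (show (0:ℝ) < cst * w by positivity)
    exact (tendsto_const_nhds.mul hinner).mul tendsto_const_nhds

/-- Lemma 5: in the interference-limited `K`-tier model with no
shadowing, when the typical user's distance to its cluster center (a tier-`i` BS) is
scaled by `ζ` (distance `ζY₀`, `Y₀` a positive random variable with continuous PDF
`f`), the total coverage probability `P_c(ζ)` — cluster-center term plus the per-tier
terms of Corollary 2 — converges, as `ζ → ∞`, to
`∑_{j=1}^K λ_j / (∑_{k=1}^K c_{jk}²(λ_k(G(α,τ)+1) + λ_k′H(α,τ)))`,
the coverage probability of a user located independently of the BSs. -/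
theorem coverage_converges_to_ppp
    (K : ℕ) (i : Fin K) (α τ : ℝ) (hα : 2 < α) (hτ : 0 < τ)
    (lam lam' : Fin K → ℝ) (hlam : ∀ k, 0 < lam k) (hlam' : ∀ k, 0 ≤ lam' k)
    (Pow : Fin K → ℝ) (hPow : ∀ k, 0 < Pow k)
    (c : Fin K → Fin K → ℝ) (hc : ∀ j k, c j k = (Pow k / Pow j) ^ (1 / α))
    (c0 : Fin K → ℝ) (hc0 : ∀ k, c0 k = (Pow k / Pow i) ^ (1 / α))
    (f : ℝ → ℝ) (hfcont : Continuous f) (hfnn : ∀ y, 0 ≤ f y)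
    (hfsupp : ∀ y : ℝ, y ≤ 0 → f y = 0)
    (hfint : ∫ y in Set.Ioi (0 : ℝ), f y = 1)
    (S : Fin K → ℝ)
    (hS : ∀ j, S j = ∑ k : Fin K,
      (c j k) ^ 2 * (lam k * (Gconst α τ + 1) + lam' k * Hconst α τ))
    (S0 : ℝ)
    (hS0 : S0 = ∑ k : Fin K,
      (c0 k) ^ 2 * (lam k * (Gconst α τ + 1) + lam' k * Hconst α τ))
    (Pc : ℝ → ℝ)
    (hPc : ∀ ζ : ℝ, 0 < ζ → Pc ζ =
      (∫ w in Set.Ioi (0 : ℝ), Real.exp (-(π * S0 * w ^ 2)) * (f (w / ζ) / ζ)) +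
      ∑ j : Fin K, 2 * π * lam j *
        ∫ w in Set.Ioi (0 : ℝ),
          Real.exp (-(π * S j * w ^ 2)) *
            (∫ y in Set.Ioi (c j i * w),
              (f (y / ζ) / ζ) / (1 + τ * (y / (c j i * w)) ^ (-α))) * w) :
    Tendsto Pc atTop (nhds (∑ j : Fin K, lam j / S j)) := by
  have hα0 : 0 < α := by linarith
  have hGH : 0 < Gconst α τ + 1 := by linarith [aux_G_nonneg hα hτ]
  have hHn := aux_H_nonneg hα hτ
  have hSpos : ∀ j, 0 < S j := by
    intro j
    rw [hS j]
    apply Finset.sum_pos _ ⟨i, Finset.mem_univ i⟩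
    intro k _
    have hcjk : 0 < c j k := by
      rw [hc]; exact Real.rpow_pos_of_pos (div_pos (hPow k) (hPow j)) _
    apply mul_pos (by positivity)
    have h1 : 0 < lam k * (Gconst α τ + 1) := mul_pos (hlam k) hGH
    have h2 : 0 ≤ lam' k * Hconst α τ := mul_nonneg (hlam' k) hHn
    linarith
  have hS0pos : 0 < S0 := by
    rw [hS0]
    apply Finset.sum_pos _ ⟨i, Finset.mem_univ i⟩
    intro k _
    have hc0k : 0 < c0 k := by
      rw [hc0]; exact Real.rpow_pos_of_pos (div_pos (hPow k) (hPow i)) _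
    apply mul_pos (by positivity)
    have h1 : 0 < lam k * (Gconst α τ + 1) := mul_pos (hlam k) hGH
    have h2 : 0 ≤ lam' k * Hconst α τ := mul_nonneg (hlam' k) hHn
    linarith
  have hfInt : IntegrableOn f (Set.Ioi 0) := integrable_of_integral_eq_one hfint
  have hfIntR : Integrable f := by
    have h1 : IntegrableOn f (Set.Iic 0) := by
      have heq : Set.EqOn f (fun _ => (0:ℝ)) (Set.Iic 0) := fun y hy => hfsupp y hy
      rw [integrableOn_congr_fun heq measurableSet_Iic]
      exact integrableOn_zero
    have h2 := h1.union hfInt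
    rwa [Set.Iic_union_Ioi, integrableOn_univ] at h2
  have hterm0 := aux_term0_tendsto hS0pos hfcont hfnn hfInt
  have hsum : Tendsto (fun ζ : ℝ => ∑ j : Fin K, 2 * π * lam j *
      ∫ w in Set.Ioi (0 : ℝ),
        Real.exp (-(π * S j * w ^ 2)) *
          (∫ y in Set.Ioi (c j i * w),
            (f (y / ζ) / ζ) / (1 + τ * (y / (c j i * w)) ^ (-α))) * w)
      atTop (𝓝 (∑ j : Fin K, lam j / S j)) := by
    apply tendsto_finset_sum
    intro j _
    have hcji : 0 < c j i := by
      rw [hc]; exact Real.rpow_pos_of_pos (div_pos (hPow i) (hPow j)) _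
    have hj := (aux_outer_tendsto hα hτ hfcont hfnn hfInt hfIntR hfint
      (hSpos j) hcji).const_mul (2 * π * lam j)
    have heq : 2 * π * lam j * (2 * (π * S j))⁻¹ = lam j / S j := by
      rw [inv_eq_one_div, mul_one_div,
        div_eq_div_iff (mul_pos two_pos (mul_pos Real.pi_pos (hSpos j))).ne'
          (hSpos j).ne']
      ring
    rwa [heq] at hj
  have hmain := hterm0.add hsum
  rw [zero_add] at hmain
  apply hmain.congr'
  filter_upwards [eventually_gt_atTop 0] with ζ hζ
  exact (hPc ζ hζ).symm
end
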